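/- arXiv:2512.18255 — 2 statements merged into one kernel-verified Lean document; each statement's English description precedes it below -/
import Mathlib

section
/- (Tail comparison gives a lower bound on the L^p-Wasserstein distance.) Let X be a Markov chain with transition kernel P and invariant probability measure π on a metric space (𝒳,d), and assume that for some p ∈ [1,∞) both π and P^n(x,·) belong to 𝒫_p(𝒳) for all x ∈ 𝒳 and n ∈ ℕ. Let g : [1,∞) → [1,∞) be continuous and increasing with g(1) = 1 and lim_{r→∞} g(r) = ∞. Let W : 𝒳 → [1,∞) satisfy |W(x) − W(y)| ≤ L_W d(x,y) for all x,y ∈ 𝒳 and some L_W ∈ (0,∞). Define H := 2^{-p} W^p · (g ∘ (2W)) and assume: (a) there exists a : [1,∞) → (0,1] such that A(r) := r a(r) is increasing with lim_{r→∞} A(r) = ∞ and ∫_{{g∘W ≥ r}} (W(x)/2)^p π(dx) ≥ a(r) for all r ≥ 1; and (b) there exists v : 𝒳 × ℕ → [1,∞), increasing in the second argument, with P^n H(x) ≤ v(x,n) for all x ∈ 𝒳 and n ∈ ℕ. Then for every n ∈ ℕ \ {0} and every x ∈ 𝒳: ( a ∘ A^{-1} ∘ (2^p v) )(x,n)^{1/p}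 / (2 L_W) ≤ 𝒲_p( π, P^n(x,·) ). -/
open MeasureTheory ProbabilityTheory Filter Set
open scoped ENNReal NNReal

noncomputable section

/-- A time-homogeneous Markov chain on a measurable space `𝒳`: a Markov transition
kernel `P` together with the path-space law `law x` of the chain started at `x`.
The field `law_markov` is the Markov property: for any event `C` depending only on the
first `n+1` coordinates, `ℙ_x(C ∩ {X_{n+1} ∈ A}) = ∫_C P(X_n, A) dℙ_x`. -/
structure MarkovChain (𝒳 : Type*) [MeasurableSpace 𝒳] where
  P : ProbabilityTheory.Kernel 𝒳 𝒳
  isMarkov : IsMarkovKernel P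
  law : 𝒳 → Measure (ℕ → 𝒳)
  law_prob : ∀ x, IsProbabilityMeasure (law x)
  law_meas : Measurable law
  law_start : ∀ x, law x {ω | ω 0 = x} = 1
  law_markov : ∀ (x : 𝒳) (n : ℕ) (C : Set (ℕ → 𝒳)) (A : Set 𝒳),
    MeasurableSet C → MeasurableSet A →
    (∀ ω ω' : ℕ → 𝒳, (∀ i ≤ n, ω i = ω' i) → (ω ∈ C ↔ ω' ∈ C)) →
    law x (C ∩ {ω | ω (n + 1) ∈ A}) = ∫⁻ ω in C, P (ω n) A ∂(law x)

namespace MarkovChain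

variable {𝒳 : Type*} [MeasurableSpace 𝒳]

/-- `mc.stepDist x n` is the law of `X_n` under `ℙ_x`, i.e. the `n`-step transition
probability `P^n(x, ·)`. -/
def stepDist (mc : MarkovChain 𝒳) (x : 𝒳) (n : ℕ) : Measure 𝒳 :=
  (mc.law x).map (fun ω => ω n)

end MarkovChain

/-- First hitting time of the set `s` by the path `ω` (equal to `⊤` if `s` is never hit). -/
def hitTime {𝒳 : Type*} (s : Set 𝒳) (ω : ℕ → 𝒳) : ℕ∞ :=
  ⨅ (n : ℕ) (_ : ω n ∈ s), (n : ℕ∞)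

/-- First return time to `B` after time `k` : `τ_B(k) = inf {n ≥ k : ω n ∈ B}`. -/
def returnTime {𝒳 : Type*} (B : Set 𝒳) (k : ℕ) (ω : ℕ → 𝒳) : ℕ∞ :=
  ⨅ (n : ℕ) (_ : k ≤ n ∧ ω n ∈ B), (n : ℕ∞)

/-- The set of paths along which `V` has `limsup_{n→∞} V(X_n) = ∞`. -/
def nonConfined {𝒳 : Type*} (V : 𝒳 → ℝ) : Set (ℕ → 𝒳) :=
  {ω | ∀ M : ℝ, ∃ᶠ n in atTop, M < V (ω n)}

/-- The `f`-variation distance between two (finite) measures: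
`‖μ - ν‖_f = sup { |∫ g dμ - ∫ g dν| : g measurable, |g| ≤ f }`. -/
def fVar {𝒳 : Type*} [MeasurableSpace 𝒳] (f : 𝒳 → ℝ) (μ ν : Measure 𝒳) : ℝ :=
  ⨆ g : {g : 𝒳 → ℝ // Measurable g ∧ ∀ x, |g x| ≤ f x},
    |(∫ x, (g : 𝒳 → ℝ) x ∂μ) - ∫ x, (g : 𝒳 → ℝ) x ∂ν|

/-- The standard setup: ergodic Markov chain with invariant probability measure `π`;
the chain is Feller, positive Harris recurrent and converges to `π` in total variation
from every starting point (hence aperiodic and `π`-irreducible). -/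
structure StdSetup {𝒳 : Type*} [TopologicalSpace 𝒳] [MeasurableSpace 𝒳]
    (mc : MarkovChain 𝒳) where
  π : Measure 𝒳
  π_prob : IsProbabilityMeasure π
  π_inv : π.bind (fun x => mc.P x) = π
  feller : ∀ (n : ℕ) (O : Set 𝒳), IsOpen O →
    LowerSemicontinuous fun x => (mc.stepDist x n O).toReal
  harris : ∀ (x : 𝒳) (A : Set 𝒳), MeasurableSet A → 0 < π A →
    mc.law x {ω | ∃ᶠ n in atTop, ω n ∈ A} = 1
  ergodic_tv : ∀ x : 𝒳,
    Tendsto (fun n => fVar (fun _ => (1 : ℝ)) (mc.stepDist x n) π) atTop (nhds 0)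

/-- The L-drift condition `L(V, φ, Ψ)` of the paper. -/
structure LDrift {𝒳 : Type*} [TopologicalSpace 𝒳] [MeasurableSpace 𝒳]
    (mc : MarkovChain 𝒳) (V : 𝒳 → ℝ) (φ : ℝ → ℝ) (Ψ : ℝ → ℝ) where
  V_one_le : ∀ x, 1 ≤ V x
  V_cont : Continuous V
  nonconf : ∀ x, mc.law x (nonConfined V) = 1
  ℓ₀ : ℝ
  one_le_ℓ₀ : 1 ≤ ℓ₀
  φ_nonneg : ∀ r ∈ Set.Ioc (0 : ℝ) 1, 0 ≤ φ r
  φ_cont : ContinuousOn φ (Set.Ioc 0 1)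
  rφ_anti : StrictAntiOn (fun r => r * φ (1 / r)) (Set.Ici (1 : ℝ))
  rφ_lim : Tendsto (fun r => r * φ (1 / r)) atTop (nhds 0)
  b : ℝ
  b_nonneg : 0 ≤ b
  drift : ∀ x, (∫ y, (V y)⁻¹ ∂(mc.P x)) - φ ((V x)⁻¹) ≤
    (V x)⁻¹ - (if V x ≤ ℓ₀ then b else 0)
  Ψ_one_le : ∀ r, 1 ≤ r → 1 ≤ Ψ r
  Ψ_diff : DifferentiableOn ℝ Ψ (Set.Ici 1)
  Ψ_mono : StrictMonoOn Ψ (Set.Ici 1)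
  Ψ_submul : ∃ C : ℝ, 0 < C ∧ ∀ r₁ r₂, 1 ≤ r₁ → 1 ≤ r₂ → Ψ (r₁ + r₂) ≤ C * Ψ r₁ * Ψ r₂
  Cconst : ℝ → ℝ → ℝ
  Cconst_mem : ∀ ℓ m, ℓ₀ < ℓ → 0 < m → Cconst ℓ m ∈ Set.Ioo (0 : ℝ) 1
  hit_lb : ∀ ℓ m, ℓ₀ < ℓ → 0 < m → ∀ r, ℓ + m < r → ∀ x, ℓ + m ≤ V x →
    ENNReal.ofReal (Cconst ℓ m / Ψ r) ≤
      mc.law x {ω | hitTime {y | r < V y} ω < hitTime {y | V y < ℓ} ω}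

/-- `G_h(r) = q (1-q) h(r) / (r φ(1/r))`. -/
def Gfun (q : ℝ) (φ h : ℝ → ℝ) (r : ℝ) : ℝ := q * (1 - q) * h r / (r * φ (1 / r))

/-- A function is locally integrable at infinity if it is integrable on `[l, ∞)`
for some `l ≥ 0`. -/
def L1locInfty (f : ℝ → ℝ) : Prop := ∃ l : ℝ, 0 ≤ l ∧ MeasureTheory.IntegrableOn f (Set.Ici l)

open scoped Classical in
/-- The modulated sum `∑_{k=0}^{T(ω)} h(V(ω_k))` (with value in `ℝ≥0∞`, the sum being a
series when `T(ω) = ∞`). -/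
def modSum {𝒳 : Type*} (h : ℝ → ℝ) (V : 𝒳 → ℝ) (T : (ℕ → 𝒳) → ℕ∞) (ω : ℕ → 𝒳) : ℝ≥0∞ :=
  ∑' n : ℕ, if (n : ℕ∞) ≤ T ω then ENNReal.ofReal (h (V (ω n))) else 0

/-- Convergence in distribution of a sequence of laws on `ℝ`: integrals of bounded
continuous functions converge. -/
def TendstoInDistribution (μs : ℕ → Measure ℝ) (ν : Measure ℝ) : Prop :=
  ∀ f : BoundedContinuousFunction ℝ ℝ,
    Tendsto (fun n => ∫ z, f z ∂(μs n)) atTop (nhds (∫ z, f z ∂ν))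

/-- The ergodic average `S_n(g)(ω) = (1/n) ∑_{k=0}^{n-1} g(ω_k)`. -/
def ergAvg {𝒳 : Type*} (g : 𝒳 → ℝ) (n : ℕ) (ω : ℕ → 𝒳) : ℝ :=
  (∑ k ∈ Finset.range n, g (ω k)) / n

/-- The CLT holds for the ergodic average `S_n(g)`: there is `σ² ∈ (0,∞)` with
`√n (S_n(g) − π(g)) → N(0,σ²)` in distribution for every starting state. -/
def CLTholds {𝒳 : Type*} [MeasurableSpace 𝒳] (mc : MarkovChain 𝒳) (π : Measure 𝒳)
    (g : 𝒳 → ℝ) : Prop :=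
  ∃ σ2 : NNReal, 0 < σ2 ∧ ∀ x : 𝒳,
    TendstoInDistribution
      (fun n => (mc.law x).map fun ω => Real.sqrt n * (ergAvg g n ω - ∫ y, g y ∂π))
      (gaussianReal 0 σ2)

end

/-- The `p`-th power Wasserstein functional: infimum over couplings `γ` of `μ` and `ν`
of `∫ d(x,y)^p dγ`. The `L^p`-Wasserstein distance is its `p`-th root. -/
noncomputable def wassersteinPow {𝒳 : Type*} [MeasurableSpace 𝒳] [PseudoMetricSpace 𝒳]
    (p : ℝ) (μ ν : Measure 𝒳) : ℝ≥0∞ :=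
  ⨅ (γ : Measure (𝒳 × 𝒳)) (_ : γ.map Prod.fst = μ) (_ : γ.map Prod.snd = ν),
    ∫⁻ z, ENNReal.ofReal (dist z.1 z.2 ^ p) ∂γ

/-- `μ ∈ 𝒫_p(𝒳)`: finite `p`-th moment of the distance to some point. -/
def HasFiniteMoment {𝒳 : Type*} [MeasurableSpace 𝒳] [PseudoMetricSpace 𝒳] (p : ℝ)
    (μ : Measure 𝒳) : Prop :=
  ∃ x₀ : 𝒳, ∫⁻ x, ENNReal.ofReal (dist x₀ x ^ p) ∂μ ≠ ⊤



lemma my_two_point_convexity (p x y : ℝ) (hp : 1 ≤ p) (hx : 0 ≤ x) (hy : 0 ≤ y) :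
    (x + y) ^ p ≤ 2 ^ (p - 1) * (x ^ p + y ^ p) := by
  have h := NNReal.rpow_add_le_mul_rpow_add_rpow x.toNNReal y.toNNReal hp
  calc (x + y) ^ p = ((x.toNNReal + y.toNNReal : ℝ≥0) : ℝ) ^ p := by
        rw [NNReal.coe_add, Real.coe_toNNReal x hx, Real.coe_toNNReal y hy]
    _ = (((x.toNNReal + y.toNNReal) ^ p : ℝ≥0) : ℝ) := by rw [NNReal.coe_rpow]
    _ ≤ (((2 : ℝ≥0) ^ (p-1) * (x.toNNReal ^ p + y.toNNReal ^ p) : ℝ≥0) : ℝ) := by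
        exact_mod_cast h
    _ = 2 ^ (p-1) * (x ^ p + y ^ p) := by
        push_cast [NNReal.coe_rpow, Real.coe_toNNReal x hx, Real.coe_toNNReal y hy]
        ring

/-- The key scalar inequality, middle case: `u/2 < w < u`. -/
lemma my_middle_case (p u w : ℝ) (hp : 1 ≤ p) (hu2 : u / 2 < w) (hwu : w < u) (hu : 0 < u) :
    (u / 2) ^ p ≤ (u - w) ^ p + (2 ^ p - 1) * (w / 2) ^ p := by
  set A := u - w with hA
  set B := w / 2 with hB
  have hA0 : 0 ≤ A := by simp [hA]; linarith
  have hB0 : 0 ≤ B := by simp [hB]; linarith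
  have hlam0 : (0:ℝ) < 2 ^ (1 - p) := Real.rpow_pos_of_pos two_pos _
  have hlam1 : (2:ℝ) ^ (1 - p) ≤ 1 := by
    calc (2:ℝ) ^ (1 - p) ≤ 2 ^ (0:ℝ) := by
          apply Real.rpow_le_rpow_of_exponent_le one_le_two; linarith
      _ = 1 := Real.rpow_zero 2
  have e1 : (2:ℝ) ^ (1 - p) * 2 ^ (p - 1) = 1 := by
    rw [← Real.rpow_add two_pos]; norm_num
  have e2 : (2:ℝ) ^ (1 - p) * 2 ^ p = 2 := by
    rw [← Real.rpow_add two_pos]; norm_num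
  -- H1 : (u/2)^p ≤ 2^(p-1) * (A^p + B^p)
  have hsum : u / 2 ≤ A + B := by simp [hA, hB]; linarith
  have H1 : (u / 2) ^ p ≤ 2 ^ (p - 1) * (A ^ p + B ^ p) := by
    calc (u / 2) ^ p ≤ (A + B) ^ p := Real.rpow_le_rpow (by linarith) hsum (by linarith)
      _ ≤ 2 ^ (p - 1) * (A ^ p + B ^ p) := my_two_point_convexity p A B hp hA0 hB0
  -- H2 : (u/2)^p ≤ 2^p * B^p
  have H2 : (u / 2) ^ p ≤ 2 ^ p * B ^ p := by
    have h4 : u / 2 ≤ 2 * B := by simp [hB]; linarith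
    calc (u / 2) ^ p ≤ (2 * B) ^ p := Real.rpow_le_rpow (by linarith) h4 (by linarith)
      _ = 2 ^ p * B ^ p := Real.mul_rpow (by norm_num) hB0
  have H1' : 2 ^ (1-p) * (u / 2) ^ p ≤ A ^ p + B ^ p := by
    calc 2 ^ (1-p) * (u / 2) ^ p ≤ 2 ^ (1-p) * (2 ^ (p - 1) * (A ^ p + B ^ p)) := by
          exact mul_le_mul_of_nonneg_left H1 hlam0.le
      _ = (2 ^ (1-p) * 2 ^ (p-1)) * (A ^ p + B ^ p) := by ring
      _ = A ^ p + B ^ p := by rw [e1, one_mul]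
  have H2' : (1 - 2 ^ (1-p)) * (u / 2) ^ p ≤ (2 ^ p - 2) * B ^ p := by
    have := mul_le_mul_of_nonneg_left H2 (by linarith : (0:ℝ) ≤ 1 - 2 ^ (1-p))
    calc (1 - 2 ^ (1-p)) * (u / 2) ^ p ≤ (1 - 2 ^ (1-p)) * (2 ^ p * B ^ p) := this
      _ = 2 ^ p * B ^ p - (2 ^ (1-p) * 2 ^ p) * B ^ p := by ring
      _ = (2 ^ p - 2) * B ^ p := by rw [e2]; ring
  nlinarith [H1', H2']

/-- The core pointwise inequality. -/
lemma my_core_ineq (g : ℝ → ℝ) (hg1 : ∀ s, 1 ≤ s → 1 ≤ g s)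
    (hgmono : MonotoneOn g (Set.Ici 1))
    (p r L D u w : ℝ) (hp : 1 ≤ p) (hr : 0 < r) (hu : 1 ≤ u) (hw : 1 ≤ w)
    (hLD : 0 ≤ L * D) (hLip : u - w ≤ L * D) (hgu : r ≤ g u) :
    (u / 2) ^ p ≤ (L * D) ^ p + (2 ^ p - 1) * ((2:ℝ) ^ (-p) * w ^ p * g (2 * w)) / r := by
  have hp0 : (0:ℝ) ≤ p := by linarith
  have h2p : (2:ℝ) ≤ 2 ^ p := by
    calc (2:ℝ) = 2 ^ (1:ℝ) := (Real.rpow_one 2).symm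
      _ ≤ 2 ^ p := Real.rpow_le_rpow_of_exponent_le one_le_two hp
  have hwp : (2:ℝ) ^ (-p) * w ^ p = (w / 2) ^ p := by
    rw [Real.div_rpow (by linarith) (by norm_num), Real.rpow_neg (by norm_num)]
    ring
  have hg2w1 : (1:ℝ) ≤ g (2 * w) := hg1 _ (by linarith)
  have hsecond_nonneg : 0 ≤ (2 ^ p - 1) * ((2:ℝ) ^ (-p) * w ^ p * g (2 * w)) / r := by
    apply div_nonneg _ hr.le
    apply mul_nonneg (by linarith)
    rw [hwp]
    exact mul_nonneg (Real.rpow_nonneg (by linarith) p) (by linarith)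
  rcases le_or_gt w (u / 2) with hcase | hcase
  · -- w ≤ u/2 : u/2 ≤ u - w ≤ L * D
    have : (u / 2) ^ p ≤ (L * D) ^ p :=
      Real.rpow_le_rpow (by linarith) (by linarith) hp0
    linarith
  · -- u/2 < w : g(2w) ≥ r
    have hg2w : r ≤ g (2 * w) := by
      calc r ≤ g u := hgu
        _ ≤ g (2 * w) := hgmono hu (by simp; linarith) (by linarith)
    have hfrac : (1:ℝ) ≤ g (2 * w) / r := (one_le_div hr).2 hg2w
    have hmain : (u / 2) ^ p ≤ (L * D) ^ p + (2 ^ p - 1) * (w / 2) ^ p := by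
      rcases le_or_gt u w with hmid | hmid
      · have h1 : (u / 2) ^ p ≤ (w / 2) ^ p :=
          Real.rpow_le_rpow (by linarith) (by linarith) hp0
        have h2 : (w / 2) ^ p ≤ (2 ^ p - 1) * (w / 2) ^ p := by
          nlinarith [Real.rpow_nonneg (show (0:ℝ) ≤ w / 2 by linarith) p]
        have h3 : (0:ℝ) ≤ (L * D) ^ p := Real.rpow_nonneg hLD p
        linarith
      · have h1 := my_middle_case p u w hp hcase hmid (by linarith)
        have h2 : (u - w) ^ p ≤ (L * D) ^ p :=
          Real.rpow_le_rpow (by linarith) hLip hp0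
        linarith
    have hstep : (2 ^ p - 1) * (w / 2) ^ p ≤
        (2 ^ p - 1) * ((2:ℝ) ^ (-p) * w ^ p * g (2 * w)) / r := by
      rw [hwp]
      have hb : (0:ℝ) ≤ (2 ^ p - 1) * (w / 2) ^ p := by
        apply mul_nonneg (by linarith) (Real.rpow_nonneg (by linarith) p)
      calc (2 ^ p - 1) * (w / 2) ^ p
          ≤ ((2 ^ p - 1) * (w / 2) ^ p) * (g (2 * w) / r) := le_mul_of_one_le_right hb hfrac
        _ = (2 ^ p - 1) * ((w / 2) ^ p * g (2 * w)) / r := by ring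
    linarith

theorem my_wasserstein_aux
    {𝒳 : Type*} [MetricSpace 𝒳] [MeasurableSpace 𝒳] [BorelSpace 𝒳]
    (π : Measure 𝒳)
    (μ : Measure 𝒳)
    (p : ℝ) (hp : 1 ≤ p)
    (g : ℝ → ℝ) (g_one_le : ∀ r, 1 ≤ r → 1 ≤ g r)
    (g_cont : ContinuousOn g (Set.Ici 1)) (g_mono : StrictMonoOn g (Set.Ici 1))
    (W : 𝒳 → ℝ) (W_one_le : ∀ x, 1 ≤ W x)
    (LW : ℝ) (hLW : 0 < LW) (hWLip : ∀ x y : 𝒳, |W x - W y| ≤ LW * dist x y)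
    (r α v₀ : ℝ) (hr1 : 1 ≤ r) (hα : 0 < α) (hα1 : α ≤ 1) (hv₀ : 1 ≤ v₀)
    (hrα : r * α = (2:ℝ) ^ p * v₀)
    (ha_tail : α ≤ ∫ x in {y | r ≤ g (W y)}, (W x / 2) ^ p ∂π)
    (hv : ∫⁻ y, ENNReal.ofReal ((2 : ℝ) ^ (-p) * W y ^ p * g (2 * W y)) ∂μ ≤
        ENNReal.ofReal v₀) :
    ENNReal.ofReal (α ^ (1 / p) / (2 * LW)) ≤ (wassersteinPow p π μ) ^ (1 / p) := by
  have hp0 : (0:ℝ) < p := by linarith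
  have hr0 : (0:ℝ) < r := by linarith
  have h2p : (2:ℝ) ≤ 2 ^ p := by
    calc (2:ℝ) = 2 ^ (1:ℝ) := (Real.rpow_one 2).symm
      _ ≤ 2 ^ p := Real.rpow_le_rpow_of_exponent_le one_le_two hp
  have h2p0 : (0:ℝ) < 2 ^ p := by linarith
  have hLWp : (0:ℝ) < LW ^ p := Real.rpow_pos_of_pos hLW p
  -- continuity/measurability infrastructure
  have hWc : Continuous W := by
    have : LipschitzWith (Real.toNNReal LW) W := by
      apply LipschitzWith.of_dist_le_mul
      intro x y
      rw [Real.dist_eq, Real.coe_toNNReal _ hLW.le]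
      exact hWLip x y
    exact this.continuous
  set G : ℝ → ℝ := fun s => g (max s 1) with hG_def
  have hGc : Continuous G :=
    g_cont.comp_continuous (continuous_id.max continuous_const) fun s => le_max_right s 1
  have hGg : ∀ s, 1 ≤ s → G s = g s := fun s hs => by
    simp only [hG_def, max_eq_left hs]
  have hgmono : MonotoneOn g (Set.Ici 1) := g_mono.monotoneOn
  set S : Set 𝒳 := {y | r ≤ g (W y)} with hS_def
  have hSeq : S = (fun y => G (W y)) ⁻¹' (Ici r) := by
    ext y
    simp [hS_def, hGg (W y) (W_one_le y)]
  have hSm : MeasurableSet S := by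
    rw [hSeq]
    exact (hGc.comp hWc).measurable measurableSet_Ici
  set φ : 𝒳 → ℝ≥0∞ := fun y => ENNReal.ofReal ((W y / 2) ^ p) with hφ_def
  have hφm : Measurable φ := by
    apply Measurable.ennreal_ofReal
    exact ((hWc.div_const 2).rpow_const fun x => Or.inr hp0.le).measurable
  set F : 𝒳 → ℝ≥0∞ := S.indicator φ with hF_def
  have hFm : Measurable F := hφm.indicator hSm
  set ψ : 𝒳 → ℝ≥0∞ :=
    fun y => ENNReal.ofReal ((2 : ℝ) ^ (-p) * W y ^ p * g (2 * W y)) with hψ_def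
  have hψm : Measurable ψ := by
    have : ψ = fun y => ENNReal.ofReal ((2 : ℝ) ^ (-p) * W y ^ p * G (2 * W y)) := by
      funext y
      rw [hψ_def, hGg (2 * W y) (by linarith [W_one_le y])]
    rw [this]
    apply Measurable.ennreal_ofReal
    apply Continuous.measurable
    exact (continuous_const.mul (hWc.rpow_const fun x => Or.inr hp0.le)).mul
      (hGc.comp (continuous_const.mul hWc))
  -- the main per-coupling bound
  have key : ENNReal.ofReal (α / (2 * LW) ^ p) ≤ wassersteinPow p π μ := by
    refine le_iInf fun γ => le_iInf fun h1 => le_iInf fun h2 => ?_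
    set I : ℝ≥0∞ := ∫⁻ z, ENNReal.ofReal (dist z.1 z.2 ^ p) ∂γ with hI_def
    -- step 1 : ofReal α ≤ ∫⁻ in S, φ ∂π
    have step1 : ENNReal.ofReal α ≤ ∫⁻ y in S, φ y ∂π := by
      by_cases hInt : Integrable (fun x => (W x / 2) ^ p) (π.restrict S)
      · rw [hφ_def]
        rw [← ofReal_integral_eq_lintegral_ofReal hInt
          (Filter.Eventually.of_forall fun x =>
            Real.rpow_nonneg (by linarith [W_one_le x]) p)]
        exact ENNReal.ofReal_le_ofReal ha_tail
      · exfalso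
        rw [integral_undef hInt] at ha_tail
        linarith
    -- step 2+3 : transfer to γ
    have step2 : ∫⁻ y in S, φ y ∂π = ∫⁻ z, F z.1 ∂γ := by
      rw [← lintegral_indicator hSm, ← hF_def, ← h1,
        lintegral_map hFm measurable_fst]
    -- pointwise bound on γ
    have hpoint : ∀ z : 𝒳 × 𝒳, F z.1 ≤
        ENNReal.ofReal (LW ^ p) * ENNReal.ofReal (dist z.1 z.2 ^ p) +
        ENNReal.ofReal ((2 ^ p - 1) / r) * ψ z.2 := by
      intro z
      rw [hF_def]
      by_cases hz : z.1 ∈ S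
      · rw [indicator_of_mem hz, hφ_def]
        have hd0 : 0 ≤ LW * dist z.1 z.2 := by positivity
        have hcore := my_core_ineq g g_one_le hgmono p r LW (dist z.1 z.2)
          (W z.1) (W z.2) hp hr0 (W_one_le z.1) (W_one_le z.2) hd0
          (le_trans (le_abs_self _) (hWLip z.1 z.2)) hz
        calc ENNReal.ofReal ((W z.1 / 2) ^ p)
            ≤ ENNReal.ofReal ((LW * dist z.1 z.2) ^ p +
              (2 ^ p - 1) * ((2:ℝ) ^ (-p) * W z.2 ^ p * g (2 * W z.2)) / r) :=
              ENNReal.ofReal_le_ofReal hcore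
          _ = ENNReal.ofReal ((LW * dist z.1 z.2) ^ p) +
              ENNReal.ofReal ((2 ^ p - 1) * ((2:ℝ) ^ (-p) * W z.2 ^ p * g (2 * W z.2)) / r) := by
              rw [ENNReal.ofReal_add (Real.rpow_nonneg hd0 p) ?_]
              · apply div_nonneg _ hr0.le
                apply mul_nonneg (by linarith)
                apply mul_nonneg
                · apply mul_nonneg (Real.rpow_nonneg (by norm_num) _)
                  exact Real.rpow_nonneg (by linarith [W_one_le z.2]) p
                · linarith [g_one_le (2 * W z.2) (by linarith [W_one_le z.2])]
          _ = ENNReal.ofReal (LW ^ p) * ENNReal.ofReal (dist z.1 z.2 ^ p) +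
              ENNReal.ofReal ((2 ^ p - 1) / r) * ψ z.2 := by
              congr 1
              · rw [Real.mul_rpow hLW.le dist_nonneg, ENNReal.ofReal_mul (Real.rpow_nonneg hLW.le p)]
              · rw [hψ_def, ← ENNReal.ofReal_mul (div_nonneg (by linarith) hr0.le)]
                congr 1
                ring
      · rw [indicator_of_notMem hz]
        exact zero_le
    -- integrate
    have step4 : ∫⁻ z, F z.1 ∂γ ≤
        ENNReal.ofReal (LW ^ p) * I + ENNReal.ofReal ((2 ^ p - 1) / r) * ENNReal.ofReal v₀ := by
      calc ∫⁻ z, F z.1 ∂γ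
          ≤ ∫⁻ z, (ENNReal.ofReal (LW ^ p) * ENNReal.ofReal (dist z.1 z.2 ^ p) +
              ENNReal.ofReal ((2 ^ p - 1) / r) * ψ z.2) ∂γ := lintegral_mono hpoint
        _ = ENNReal.ofReal (LW ^ p) * I + ENNReal.ofReal ((2 ^ p - 1) / r) * ∫⁻ z, ψ z.2 ∂γ := by
            have hmeas2 : Measurable fun z : 𝒳 × 𝒳 =>
                ENNReal.ofReal ((2 ^ p - 1) / r) * ψ z.2 :=
              (hψm.comp measurable_snd).const_mul _
            rw [lintegral_add_right _ hmeas2,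
              lintegral_const_mul' _ _ ENNReal.ofReal_ne_top,
              lintegral_const_mul' _ _ ENNReal.ofReal_ne_top]
        _ ≤ ENNReal.ofReal (LW ^ p) * I + ENNReal.ofReal ((2 ^ p - 1) / r) * ENNReal.ofReal v₀ := by
            apply add_le_add_right
            apply mul_le_mul_right
            rw [← h2, lintegral_map hψm measurable_snd] at hv
            exact hv
    have main : ENNReal.ofReal α ≤
        ENNReal.ofReal (LW ^ p) * I + ENNReal.ofReal ((2 ^ p - 1) / r * v₀) := by
      rw [ENNReal.ofReal_mul (div_nonneg (by linarith) hr0.le)]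
      exact le_trans step1 (le_trans (le_of_eq step2) step4)
    -- algebra
    have halg : α / (2 * LW) ^ p * LW ^ p + (2 ^ p - 1) / r * v₀ = α := by
      have h2LW : (2 * LW : ℝ) ^ p = 2 ^ p * LW ^ p := Real.mul_rpow (by norm_num) hLW.le
      rw [h2LW]
      rw [div_mul_eq_mul_div, mul_div_mul_right _ _ hLWp.ne']
      have e3 : (2 ^ p - 1) / r * v₀ = (2 ^ p - 1) * v₀ / r := by ring
      rw [e3, div_add_div _ _ h2p0.ne' hr0.ne', div_eq_iff (by positivity)]
      linear_combination (1 - 2 ^ p) * hrα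
    have keyeq : ENNReal.ofReal (α / (2 * LW) ^ p) * ENNReal.ofReal (LW ^ p) +
        ENNReal.ofReal ((2 ^ p - 1) / r * v₀) = ENNReal.ofReal α := by
      have hc2 : (0:ℝ) ≤ (2 ^ p - 1) / r * v₀ :=
        mul_nonneg (div_nonneg (by linarith) hr0.le) (by linarith)
      rw [← ENNReal.ofReal_mul (by positivity), ← ENNReal.ofReal_add (by positivity) hc2, halg]
    have main2 : ENNReal.ofReal (α / (2 * LW) ^ p) * ENNReal.ofReal (LW ^ p) +
        ENNReal.ofReal ((2 ^ p - 1) / r * v₀) ≤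
        ENNReal.ofReal (LW ^ p) * I + ENNReal.ofReal ((2 ^ p - 1) / r * v₀) := by
      rw [keyeq]; exact main
    have main3 : ENNReal.ofReal (α / (2 * LW) ^ p) * ENNReal.ofReal (LW ^ p) ≤
        ENNReal.ofReal (LW ^ p) * I :=
      (ENNReal.add_le_add_iff_right ENNReal.ofReal_ne_top).1 main2
    rw [mul_comm] at main3
    exact (ENNReal.mul_le_mul_iff_right (by simp [ENNReal.ofReal_eq_zero]; linarith)
      ENNReal.ofReal_ne_top).1 main3
  -- conclude via rpow
  have hpos : (0:ℝ) < α / (2 * LW) ^ p := by positivity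
  calc ENNReal.ofReal (α ^ (1 / p) / (2 * LW))
      = ENNReal.ofReal ((α / (2 * LW) ^ p) ^ (1 / p)) := by
        congr 1
        have hden : ((2 * LW : ℝ) ^ p) ^ (1 / p) = 2 * LW := by
          rw [← Real.rpow_mul (by positivity), mul_one_div, div_self hp0.ne', Real.rpow_one]
        rw [Real.div_rpow hα.le (Real.rpow_nonneg (by positivity) p), hden]
    _ = (ENNReal.ofReal (α / (2 * LW) ^ p)) ^ (1 / p) := by
        rw [ENNReal.ofReal_rpow_of_pos hpos]
    _ ≤ (wassersteinPow p π μ) ^ (1 / p) :=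
        ENNReal.rpow_le_rpow key (by positivity)


/-- **Lemma (tail comparison gives a lower bound on the `L^p`-Wasserstein distance).**
Let `X` be a Markov chain with invariant probability measure `π` on a metric space,
`π, P^n(x,·) ∈ 𝒫_p(𝒳)`, `g : [1,∞) → [1,∞)` continuous increasing with `g(1) = 1` and
`g → ∞`, and `W ≥ 1` Lipschitz with constant `L_W`. With
`H = 2^{-p} W^p (g ∘ 2W)`, if (a) `a : [1,∞) → (0,1]` has `A(r) = r a(r)` increasing
to infinity (inverse `Ainv`) with `∫_{{g∘W ≥ r}} (W/2)^p dπ ≥ a(r)` for `r ≥ 1`, and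
(b) `P^n H(x) ≤ v(x,n)` with `v` increasing in `n`, then for every `n ≥ 1` and `x`:
`(a ∘ A⁻¹ ∘ 2^p v)(x,n)^{1/p}/(2 L_W) ≤ 𝒲_p(π, P^n(x,·))`. -/
theorem wasserstein_tail_comparison_lower_bound
    {𝒳 : Type*} [MetricSpace 𝒳] [MeasurableSpace 𝒳] [BorelSpace 𝒳]
    (mc : MarkovChain 𝒳) (π : Measure 𝒳) [IsProbabilityMeasure π]
    (hπ_inv : π.bind (fun x => mc.P x) = π)
    (p : ℝ) (hp : 1 ≤ p)
    (hmomπ : HasFiniteMoment p π)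
    (hmomP : ∀ (x : 𝒳) (n : ℕ), HasFiniteMoment p (mc.stepDist x n))
    (g : ℝ → ℝ) (g_one_le : ∀ r, 1 ≤ r → 1 ≤ g r)
    (g_cont : ContinuousOn g (Set.Ici 1)) (g_mono : StrictMonoOn g (Set.Ici 1))
    (g_one : g 1 = 1) (g_tendsto : Tendsto g atTop atTop)
    (W : 𝒳 → ℝ) (W_one_le : ∀ x, 1 ≤ W x)
    (LW : ℝ) (hLW : 0 < LW) (hWLip : ∀ x y : 𝒳, |W x - W y| ≤ LW * dist x y)
    (a : ℝ → ℝ) (ha_mem : ∀ r, 1 ≤ r → a r ∈ Set.Ioc (0 : ℝ) 1)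
    (hA_mono : StrictMonoOn (fun r => r * a r) (Set.Ici 1))
    (hA_tendsto : Tendsto (fun r => r * a r) atTop atTop)
    (Ainv : ℝ → ℝ) (hAinv_left : ∀ r, 1 ≤ r → Ainv (r * a r) = r)
    (hAinv_right : ∀ t, 1 * a 1 ≤ t → Ainv t * a (Ainv t) = t ∧ 1 ≤ Ainv t)
    (ha_tail : ∀ r, 1 ≤ r →
      a r ≤ ∫ x in {y | r ≤ g (W y)}, (W x / 2) ^ p ∂π)
    (v : 𝒳 → ℕ → ℝ) (hv_one_le : ∀ x n, 1 ≤ v x n) (hv_mono : ∀ x, Monotone (v x))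
    (hv : ∀ (x : 𝒳) (n : ℕ),
      ∫⁻ y, ENNReal.ofReal ((2 : ℝ) ^ (-p) * W y ^ p * g (2 * W y)) ∂(mc.stepDist x n) ≤
        ENNReal.ofReal (v x n)) :
    ∀ (x : 𝒳) (n : ℕ), n ≠ 0 →
      ENNReal.ofReal ((a (Ainv ((2 : ℝ) ^ p * v x n))) ^ (1 / p) / (2 * LW)) ≤
        (wassersteinPow p π (mc.stepDist x n)) ^ (1 / p) := by
  intro x n hn
  have hv₀ := hv_one_le x n
  have h2p : (2:ℝ) ≤ 2 ^ p := by
    calc (2:ℝ) = 2 ^ (1:ℝ) := (Real.rpow_one 2).symm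
      _ ≤ 2 ^ p := Real.rpow_le_rpow_of_exponent_le one_le_two hp
  have ht : 1 * a 1 ≤ (2:ℝ) ^ p * v x n := by
    have h1 := (ha_mem 1 le_rfl).2
    nlinarith
  obtain ⟨hr_eq, hr_one⟩ := hAinv_right _ ht
  have hα := ha_mem _ hr_one
  exact my_wasserstein_aux π (mc.stepDist x n) p hp g g_one_le g_cont g_mono W W_one_le
    LW hLW hWLip (Ainv ((2:ℝ) ^ p * v x n)) (a (Ainv ((2:ℝ) ^ p * v x n))) (v x n)
    hr_one hα.1 hα.2 hv₀ hr_eq (ha_tail _ hr_one) (hv x n)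
end

section
/- (Transience of Euler-type schemes with heavy-tailed increments and super-linear drift.) Let h > 0, let b : ℝᵈ → ℝᵈ be continuous, and let (Z_k)_{k∈ℕ} be an i.i.d. sequence of ℝᵈ-valued random vectors with mean zero whose common density p_{α,h} satisfies, for some α ∈ (1,2): 0 < liminf_{r→∞} r^α ∫_{{|x|>r}} p_{α,h}(x) dx ≤ limsup_{r→∞} r^α ∫_{{|x|>r}} p_{α,h}(x) dx < ∞. Define the Markov chain X = (X_n)_{n∈ℕ} by X_{k+1} = X_k + h b(X_k) + Z_{k+1} for k ∈ ℕ. If liminf_{|x|→∞} |b(x)|/|x| = ∞, then the chain X is transient: ℙ_x( lim_{n→∞} |X_n| = ∞ ) = 1 for every starting point x ∈ ℝᵈ. -/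
open MeasureTheory ProbabilityTheory Filter Set
open scoped ENNReal NNReal

noncomputable section

/-- The Euler-type Markov chain `X_{k+1} = X_k + h b(X_k) + Z_{k+1}`, `X_0 = x`,
driven by the noise sequence `Z`. -/
def eulerChain {Ω E : Type*} [AddCommGroup E] [Module ℝ E]
    (h : ℝ) (b : E → E) (Z : ℕ → Ω → E) (x : E) : ℕ → Ω → E
  | 0 => fun _ => x
  | (k + 1) => fun ω =>
      eulerChain h b Z x k ω + h • b (eulerChain h b Z x k ω) + Z (k + 1) ω

/-- **Theorem (transience of Euler-type schemes with heavy-tailed increments and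
super-linear drift).** Let `h > 0`, `b : ℝᵈ → ℝᵈ` continuous, and `(Z_k)` i.i.d. mean-zero
random vectors with common density `p` satisfying
`0 < liminf_{r→∞} r^α ∫_{|x|>r} p ≤ limsup_{r→∞} r^α ∫_{|x|>r} p < ∞` for some
`α ∈ (1,2)`. If `liminf_{|x|→∞} |b(x)|/|x| = ∞`, then the chain
`X_{k+1} = X_k + h b(X_k) + Z_{k+1}` is transient: `ℙ_x(|X_n| → ∞) = 1` for every
starting point `x`. -/
theorem euler_scheme_transient
    (d : ℕ)
    {Ω : Type*} [MeasurableSpace Ω] (μ : Measure Ω) [IsProbabilityMeasure μ]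
    (h : ℝ) (hh : 0 < h)
    (b : EuclideanSpace ℝ (Fin d) → EuclideanSpace ℝ (Fin d)) (hb : Continuous b)
    (Z : ℕ → Ω → EuclideanSpace ℝ (Fin d))
    (hZ_meas : ∀ k, Measurable (Z k))
    (hZ_indep : iIndepFun (m := fun _ : ℕ => (inferInstance : MeasurableSpace (EuclideanSpace ℝ (Fin d)))) Z μ)
    (p : EuclideanSpace ℝ (Fin d) → ℝ≥0∞) (hp_meas : Measurable p)
    (hZ_law : ∀ k, μ.map (Z k) = MeasureTheory.volume.withDensity p)
    (hZ_int : ∀ k, Integrable (Z k) μ)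
    (hZ_mean : ∀ k, ∫ ω, Z k ω ∂μ = 0)
    (α : ℝ) (hα : α ∈ Set.Ioo (1 : ℝ) 2)
    (htail_lb : 0 < Filter.liminf
      (fun r : ℝ => ENNReal.ofReal (r ^ α) * μ.map (Z 0) {z | r < ‖z‖}) atTop)
    (htail_ub : Filter.limsup
      (fun r : ℝ => ENNReal.ofReal (r ^ α) * μ.map (Z 0) {z | r < ‖z‖}) atTop < ⊤)
    (hdrift : Tendsto (fun x : EuclideanSpace ℝ (Fin d) => ‖b x‖ / ‖x‖)
      (Filter.comap (fun x : EuclideanSpace ℝ (Fin d) => ‖x‖) atTop) atTop) :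
    ∀ x : EuclideanSpace ℝ (Fin d),
      ∀ᵐ ω ∂μ, Tendsto (fun n => ‖eulerChain h b Z x n ω‖) atTop atTop := by
  intro x
  set X : ℕ → Ω → EuclideanSpace ℝ (Fin d) := eulerChain h b Z x with hX
  -- ### The filtration generated by the noise
  set 𝒢 : ℕ → MeasurableSpace Ω :=
    fun n => ⨆ i ∈ {i : ℕ | i ≤ n}, MeasurableSpace.comap (Z i) inferInstance with h𝒢
  have h𝒢_le : ∀ n, 𝒢 n ≤ ‹MeasurableSpace Ω› := by
    intro n
    exact iSup_le fun i => iSup_le fun _ => (hZ_meas i).comap_le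
  have h𝒢_mono : ∀ {k n : ℕ}, k ≤ n → 𝒢 k ≤ 𝒢 n := by
    intro k n hkn
    exact biSup_mono fun i (hi : i ≤ k) => hi.trans hkn
  have hZG : ∀ i n, i ≤ n → Measurable[𝒢 n] (Z i) := by
    intro i n hin
    refine Measurable.mono (comap_measurable (Z i)) ?_ le_rfl
    exact le_iSup₂ (f := fun i (_ : i ∈ {i : ℕ | i ≤ n}) =>
      MeasurableSpace.comap (Z i) inferInstance) i hin
  have hXG : ∀ n, Measurable[𝒢 n] (X n) := by
    intro n; induction n with
    | zero => exact measurable_const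
    | succ k ih =>
      have h1 : Measurable[𝒢 (k+1)] (X k) := ih.mono (h𝒢_mono k.le_succ) le_rfl
      have h2 : Measurable[𝒢 (k+1)] (Z (k+1)) := hZG _ _ le_rfl
      have hcont : Continuous fun y : EuclideanSpace ℝ (Fin d) => y + h • b y :=
        continuous_id.add (hb.const_smul h)
      exact ((hcont.measurable.comp h1).add h2 : _)
  have hIndep : ∀ (N m : ℕ), N < m →
      Indep (𝒢 N) (MeasurableSpace.comap (Z m) inferInstance) μ := by
    intro N m hNm
    have h := indep_iSup_of_disjoint (m := fun i => MeasurableSpace.comap (Z i) inferInstance)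
      (fun i => (hZ_meas i).comap_le) hZ_indep.iIndep
      (S := {i : ℕ | i ≤ N}) (T := {m})
      (by simp only [Set.disjoint_left, Set.mem_setOf_eq, Set.mem_singleton_iff]; omega)
    simpa [h𝒢] using h
  -- ### The tail function of the noise
  set tail : ℝ → ℝ≥0∞ := fun r => μ.map (Z 0) {z | r < ‖z‖} with htail_def
  have hset_meas : ∀ r : ℝ, MeasurableSet {z : EuclideanSpace ℝ (Fin d) | r < ‖z‖} :=
    fun r => measurableSet_lt measurable_const measurable_norm
  have htail_eq : ∀ (k : ℕ) (r : ℝ), μ {ω | r < ‖Z k ω‖} = tail r := by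
    intro k r
    have hmap : μ.map (Z k) = μ.map (Z 0) := by rw [hZ_law k, hZ_law 0]
    show μ {ω | r < ‖Z k ω‖} = (Measure.map (Z 0) μ) {z | r < ‖z‖}
    rw [← hmap, Measure.map_apply (hZ_meas k) (hset_meas r)]
    rfl
  have htail_mono : ∀ {r r' : ℝ}, r ≤ r' → tail r' ≤ tail r := by
    intro r r' hrr'
    exact measure_mono fun z hz => lt_of_le_of_lt hrr' hz
  have htail_pos : ∀ r : ℝ, 0 < tail r := by
    by_contra hcon
    push_neg at hcon
    obtain ⟨r₀, hr₀⟩ := hcon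
    have hr00 : tail r₀ = 0 := le_antisymm hr₀ zero_le
    have hev : (fun r : ℝ => ENNReal.ofReal (r ^ α) * μ.map (Z 0) {z | r < ‖z‖})
        =ᶠ[atTop] fun _ => (0 : ℝ≥0∞) := by
      filter_upwards [eventually_ge_atTop r₀] with r hr
      have : tail r = 0 := le_antisymm (hr00 ▸ htail_mono hr) zero_le
      simpa [htail_def] using Or.inr this
    rw [liminf_congr hev, liminf_const] at htail_lb
    exact lt_irrefl _ htail_lb
  obtain ⟨C, hC_lt, r₀, hr₀1, hr₀⟩ :
      ∃ C : ℝ≥0∞, C < ⊤ ∧ ∃ r₀ : ℝ, 1 ≤ r₀ ∧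
        ∀ r, r₀ ≤ r → ENNReal.ofReal (r ^ α) * tail r ≤ C := by
    obtain ⟨C, hlt, hCtop⟩ := exists_between htail_ub
    have hev := eventually_lt_of_limsup_lt hlt
    rw [eventually_atTop] at hev
    obtain ⟨a, ha⟩ := hev
    exact ⟨C, hCtop, max a 1, le_max_right _ _,
      fun r hr => (ha r ((le_max_left _ _).trans hr)).le⟩
  -- ### Drift bound
  obtain ⟨M, hM⟩ : ∃ M : ℝ, ∀ y : EuclideanSpace ℝ (Fin d), M ≤ ‖y‖ → 11 / h ≤ ‖b y‖ / ‖y‖ := by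
    have hmem : {y : EuclideanSpace ℝ (Fin d) | 11 / h ≤ ‖b y‖ / ‖y‖} ∈
        Filter.comap (fun y : EuclideanSpace ℝ (Fin d) => ‖y‖) atTop :=
      hdrift (mem_atTop (11 / h))
    rw [mem_comap] at hmem
    obtain ⟨t, ht, hsub⟩ := hmem
    rw [mem_atTop_sets] at ht
    obtain ⟨M, hM⟩ := ht
    exact ⟨M, fun y hy => hsub (hM _ hy)⟩
  set M₁ : ℝ := max M 1 with hM₁
  have hM₁1 : (1:ℝ) ≤ M₁ := le_max_right _ _
  have hdrift' : ∀ y : EuclideanSpace ℝ (Fin d), M₁ ≤ ‖y‖ → 11 * ‖y‖ ≤ h * ‖b y‖ := by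
    intro y hy
    have hy1 : (1:ℝ) ≤ ‖y‖ := hM₁1.trans hy
    have hypos : (0:ℝ) < ‖y‖ := lt_of_lt_of_le one_pos hy1
    have h2 := hM y ((le_max_left _ _).trans hy)
    rw [div_le_div_iff₀ hh hypos] at h2
    linarith
  -- ### One-step norm lower bound
  have step_norm : ∀ (n : ℕ) (ω : Ω),
      h * ‖b (X n ω)‖ - ‖X n ω‖ - ‖Z (n+1) ω‖ ≤ ‖X (n+1) ω‖ := by
    intro n ω
    have heq : X (n+1) ω = X n ω + h • b (X n ω) + Z (n+1) ω := rfl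
    have h1 : ‖h • b (X n ω)‖ ≤ ‖X (n+1) ω‖ + ‖X n ω‖ + ‖Z (n+1) ω‖ := by
      have h2 : h • b (X n ω) = X (n+1) ω - X n ω - Z (n+1) ω := by rw [heq]; abel
      calc ‖h • b (X n ω)‖ = ‖X (n+1) ω - X n ω - Z (n+1) ω‖ := by rw [h2]
        _ ≤ ‖X (n+1) ω - X n ω‖ + ‖Z (n+1) ω‖ := norm_sub_le _ _
        _ ≤ ‖X (n+1) ω‖ + ‖X n ω‖ + ‖Z (n+1) ω‖ := by
            have := norm_sub_le (X (n+1) ω) (X n ω); linarith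
    have h3 : ‖h • b (X n ω)‖ = h * ‖b (X n ω)‖ := by
      rw [norm_smul, Real.norm_eq_abs, abs_of_pos hh]
    linarith
  -- ### Deterministic escape
  have escape : ∀ (R : ℝ), M₁ ≤ R → ∀ (n : ℕ) (ω : Ω),
      R ≤ ‖X n ω‖ → (∀ j : ℕ, ‖Z (n + 1 + j) ω‖ ≤ R * 9 ^ j) →
      ∀ j : ℕ, R * 9 ^ j ≤ ‖X (n + j) ω‖ := by
    intro R hR n ω h0 hZb j
    induction j with
    | zero => simpa using h0
    | succ j ih =>
      have h9j : (1:ℝ) ≤ 9 ^ j := one_le_pow₀ (by norm_num)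
      have hRM : M₁ ≤ ‖X (n + j) ω‖ := by nlinarith
      have hdr := hdrift' _ hRM
      have hz : ‖Z (n + j + 1) ω‖ ≤ R * 9 ^ j := by
        have := hZb j; rwa [show n + 1 + j = n + j + 1 by omega] at this
      have hstep := step_norm (n + j) ω
      have h99 : R * 9 ^ (j+1) = 9 * (R * 9 ^ j) := by ring
      have : R * 9 ^ (j+1) ≤ ‖X (n + j + 1) ω‖ := by linarith
      rwa [show n + (j+1) = n + j + 1 by omega]
  have escape_tendsto : ∀ (R : ℝ), 1 ≤ R → ∀ (n : ℕ) (ω : Ω),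
      (∀ j : ℕ, R * 9 ^ j ≤ ‖X (n + j) ω‖) →
      Tendsto (fun m => ‖X m ω‖) atTop atTop := by
    intro R hR n ω hge
    rw [← tendsto_add_atTop_iff_nat n]
    have hlim : Tendsto (fun j : ℕ => R * 9 ^ j) atTop atTop :=
      (tendsto_pow_atTop_atTop_of_one_lt (by norm_num : (1:ℝ) < 9)).const_mul_atTop
        (lt_of_lt_of_le one_pos hR)
    refine tendsto_atTop_mono (fun j => ?_) hlim
    exact (hge j).trans_eq (by rw [Nat.add_comm])
  -- ### The chain reaches every level almost surely
  have reach : ∀ R : ℝ, μ {ω | ∀ n, ‖X n ω‖ < R} = 0 := by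
    intro R
    obtain ⟨c, hc⟩ : ∃ c : ℝ, ∀ y : EuclideanSpace ℝ (Fin d),
        ‖y‖ ≤ R → ‖y + h • b y‖ ≤ c := by
      obtain ⟨c, hc⟩ := (isCompact_closedBall (0 : EuclideanSpace ℝ (Fin d)) R).exists_bound_of_continuousOn
        ((continuous_id.add (hb.const_smul h)).continuousOn)
      exact ⟨c, fun y hy => hc y (by simpa [Metric.mem_closedBall, dist_zero_right] using hy)⟩
    set δ : ℝ≥0∞ := tail (R + c) with hδ
    have hδpos : 0 < δ := htail_pos _
    set A : ℕ → Set Ω := fun N => ⋂ n, ⋂ (_ : n ≤ N), {ω | ‖X n ω‖ < R} with hA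
    have hA_meas : ∀ N, MeasurableSet[𝒢 N] (A N) := by
      intro N
      refine MeasurableSet.iInter fun n => MeasurableSet.iInter fun hn => ?_
      exact ((hXG n).mono (h𝒢_mono hn) le_rfl)
        (measurableSet_lt measurable_norm measurable_const :
          MeasurableSet {y : EuclideanSpace ℝ (Fin d) | ‖y‖ < R})
    have hstep : ∀ N, μ (A (N+1)) ≤ μ (A N) * (1 - δ) := by
      intro N
      set B : Set Ω := {ω | ‖Z (N+1) ω‖ ≤ R + c} with hB
      have hB_comap : MeasurableSet[MeasurableSpace.comap (Z (N+1)) inferInstance] B :=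
        ⟨{z | ‖z‖ ≤ R + c}, measurableSet_le measurable_norm measurable_const, rfl⟩
      have hsub : A (N+1) ⊆ A N ∩ B := by
        intro ω hω
        simp only [hA, Set.mem_iInter, Set.mem_setOf_eq] at hω
        constructor
        · simp only [hA, Set.mem_iInter, Set.mem_setOf_eq]
          exact fun n hn => hω n (hn.trans N.le_succ)
        · have hXN : ‖X N ω‖ < R := hω N N.le_succ
          have hXN1 : ‖X (N+1) ω‖ < R := hω (N+1) le_rfl
          have heq : Z (N+1) ω = X (N+1) ω - (X N ω + h • b (X N ω)) := by
            show Z (N+1) ω = (X N ω + h • b (X N ω) + Z (N+1) ω) - (X N ω + h • b (X N ω))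
            abel
          have hbd : ‖Z (N+1) ω‖ ≤ ‖X (N+1) ω‖ + ‖X N ω + h • b (X N ω)‖ := by
            rw [heq]; exact norm_sub_le _ _
          have := hc (X N ω) hXN.le
          show ‖Z (N+1) ω‖ ≤ R + c
          linarith
      have hind := (Indep_iff _ _ _).mp (hIndep N (N+1) N.lt_succ_self) (A N) B
        (hA_meas N) hB_comap
      have hμB : μ B = 1 - δ := by
        have hBc : Bᶜ = {ω | R + c < ‖Z (N+1) ω‖} := by
          ext ω; simp [hB, not_le]
        have h1 : μ Bᶜ = δ := by rw [hBc, htail_eq (N+1) (R+c)]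
        have hBmeas : MeasurableSet B := by
          exact measurableSet_le ((hZ_meas (N+1)).norm) measurable_const
        have h2 := prob_compl_eq_one_sub (μ := μ) hBmeas
        rw [h1] at h2
        have hδ1 : δ ≤ 1 := by rw [← h1]; exact prob_le_one
        calc μ B = 1 - (1 - μ B) := by
              rw [ENNReal.sub_sub_cancel ENNReal.one_ne_top (prob_le_one)]
          _ = 1 - δ := by rw [← h2]
      calc μ (A (N+1)) ≤ μ (A N ∩ B) := measure_mono hsub
        _ = μ (A N) * μ B := hind
        _ = μ (A N) * (1 - δ) := by rw [hμB]
    have hgeom : ∀ N, μ (A N) ≤ (1 - δ) ^ N := by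
      intro N; induction N with
      | zero => simpa using prob_le_one
      | succ N ih =>
        calc μ (A (N+1)) ≤ μ (A N) * (1 - δ) := hstep N
          _ ≤ (1 - δ) ^ N * (1 - δ) := mul_le_mul_left ih _
          _ = (1 - δ) ^ (N+1) := (pow_succ _ _).symm
    have hlt1 : (1 : ℝ≥0∞) - δ < 1 :=
      ENNReal.sub_lt_self ENNReal.one_ne_top one_ne_zero hδpos.ne'
    have htends : Tendsto (fun N : ℕ => ((1:ℝ≥0∞) - δ) ^ N) atTop (nhds 0) :=
      ENNReal.tendsto_pow_atTop_nhds_zero_of_lt_one hlt1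
    have hsub : ∀ N, {ω | ∀ n, ‖X n ω‖ < R} ⊆ A N := by
      intro N ω hω
      simp only [hA, Set.mem_iInter, Set.mem_setOf_eq]
      exact fun n _ => hω n
    have hle : ∀ N, μ {ω | ∀ n, ‖X n ω‖ < R} ≤ ((1:ℝ≥0∞) - δ) ^ N :=
      fun N => (measure_mono (hsub N)).trans (hgeom N)
    have := ge_of_tendsto htends (Eventually.of_forall hle)
    exact le_antisymm this zero_le
  -- ### Geometric tail sum bound
  set β : ℝ≥0∞ := ENNReal.ofReal ((9:ℝ) ^ α) with hβ
  have h9α : (1:ℝ) < (9:ℝ) ^ α := by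
    rw [Real.one_lt_rpow_iff (by norm_num)]
    exact Or.inl ⟨by norm_num, by linarith [hα.1]⟩
  have hβ1 : 1 < β := ENNReal.one_lt_ofReal.mpr h9α
  have hβ0 : β ≠ 0 := (lt_trans one_pos hβ1 : (0:ℝ≥0∞) < β).ne'
  have hβtop : β ≠ ⊤ := ENNReal.ofReal_ne_top
  set K : ℝ≥0∞ := C * (1 - β⁻¹)⁻¹ with hK
  have hKtop : K ≠ ⊤ := by
    apply ENNReal.mul_ne_top hC_lt.ne
    have h1 : (1:ℝ≥0∞) - β⁻¹ ≠ 0 := by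
      intro hzero
      rw [tsub_eq_zero_iff_le] at hzero
      exact absurd (ENNReal.inv_lt_one.mpr hβ1) (not_lt.mpr hzero)
    exact ENNReal.inv_ne_top.mpr h1
  have tail_bound : ∀ (R : ℝ), r₀ ≤ R → ∀ j : ℕ,
      tail (R * 9 ^ j) ≤ C * (ENNReal.ofReal (R ^ α))⁻¹ * (β⁻¹) ^ j := by
    intro R hR j
    have hR1 : (1:ℝ) ≤ R := hr₀1.trans hR
    have hR0 : (0:ℝ) < R := lt_of_lt_of_le one_pos hR1
    have h9j : (1:ℝ) ≤ 9 ^ j := one_le_pow₀ (by norm_num)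
    have hRj : r₀ ≤ R * 9 ^ j := hR.trans (le_mul_of_one_le_right hR0.le h9j)
    have hRjpos : (0:ℝ) < R * 9 ^ j := by positivity
    have hmul := hr₀ _ hRj
    have hrpow : ((R * 9 ^ j : ℝ)) ^ α = R ^ α * ((9:ℝ) ^ α) ^ j := by
      rw [Real.mul_rpow hR0.le (by positivity)]
      congr 1
      rw [← Real.rpow_natCast (9:ℝ) j, ← Real.rpow_mul (by norm_num), mul_comm,
        Real.rpow_mul (by norm_num), Real.rpow_natCast]
    have hofReal : ENNReal.ofReal ((R * 9 ^ j : ℝ) ^ α)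
        = ENNReal.ofReal (R ^ α) * β ^ j := by
      rw [hrpow, ENNReal.ofReal_mul (by positivity), ENNReal.ofReal_pow (by positivity)]
    have ha0 : ENNReal.ofReal (R ^ α) ≠ 0 := by
      simp only [Ne, ENNReal.ofReal_eq_zero, not_le]
      positivity
    have hatop : ENNReal.ofReal (R ^ α) ≠ ⊤ := ENNReal.ofReal_ne_top
    have hprod0 : ENNReal.ofReal (R ^ α) * β ^ j ≠ 0 :=
      mul_ne_zero ha0 (pow_ne_zero _ hβ0)
    have hprodtop : ENNReal.ofReal (R ^ α) * β ^ j ≠ ⊤ :=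
      ENNReal.mul_ne_top hatop (ENNReal.pow_ne_top hβtop)
    have h1 : tail (R * 9 ^ j) ≤ C / (ENNReal.ofReal (R ^ α) * β ^ j) := by
      rw [ENNReal.le_div_iff_mul_le (Or.inl hprod0) (Or.inl hprodtop)]
      rw [← hofReal, mul_comm]
      exact hmul
    calc tail (R * 9 ^ j) ≤ C / (ENNReal.ofReal (R ^ α) * β ^ j) := h1
      _ = C * ((ENNReal.ofReal (R ^ α))⁻¹ * (β ^ j)⁻¹) := by
          rw [div_eq_mul_inv, ENNReal.mul_inv (Or.inl ha0) (Or.inl hatop)]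
      _ = C * (ENNReal.ofReal (R ^ α))⁻¹ * (β⁻¹) ^ j := by
          rw [ENNReal.inv_pow, mul_assoc]
  have tail_sum : ∀ (R : ℝ), r₀ ≤ R →
      (∑' j : ℕ, tail (R * 9 ^ j)) ≤ K * (ENNReal.ofReal (R ^ α))⁻¹ := by
    intro R hR
    calc (∑' j : ℕ, tail (R * 9 ^ j))
        ≤ ∑' j : ℕ, C * (ENNReal.ofReal (R ^ α))⁻¹ * (β⁻¹) ^ j :=
          ENNReal.tsum_le_tsum (tail_bound R hR)
      _ = C * (ENNReal.ofReal (R ^ α))⁻¹ * (1 - β⁻¹)⁻¹ := by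
          rw [ENNReal.tsum_mul_left, ENNReal.tsum_geometric]
      _ = K * (ENNReal.ofReal (R ^ α))⁻¹ := by rw [hK]; ring
  -- ### Main estimate: the failure event has measure ≤ K / R^α
  set Bad : Set Ω := {ω | ¬ Tendsto (fun n => ‖X n ω‖) atTop atTop} with hBad
  have main : ∀ R : ℝ, max M₁ r₀ ≤ R → μ Bad ≤ K * (ENNReal.ofReal (R ^ α))⁻¹ := by
    intro R hR
    have hRM₁ : M₁ ≤ R := (le_max_left _ _).trans hR
    have hRr₀ : r₀ ≤ R := (le_max_right _ _).trans hR
    have hR1 : (1:ℝ) ≤ R := hM₁1.trans hRM₁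
    set FH : ℕ → Set Ω := fun n => {ω | R ≤ ‖X n ω‖ ∧ ∀ m, m < n → ‖X m ω‖ < R} with hFH
    have hFH_measG : ∀ n, MeasurableSet[𝒢 n] (FH n) := by
      intro n
      have h1 : MeasurableSet[𝒢 n] {ω | R ≤ ‖X n ω‖} :=
        (hXG n) (measurableSet_le measurable_const measurable_norm :
          MeasurableSet {y : EuclideanSpace ℝ (Fin d) | R ≤ ‖y‖})
      have h2 : MeasurableSet[𝒢 n] {ω | ∀ m, m < n → ‖X m ω‖ < R} := by
        have heq : {ω | ∀ m, m < n → ‖X m ω‖ < R}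
            = ⋂ m, ⋂ (_ : m < n), {ω | ‖X m ω‖ < R} := by
          ext ω; simp
        rw [heq]
        refine MeasurableSet.iInter fun m => MeasurableSet.iInter fun hm => ?_
        exact ((hXG m).mono (h𝒢_mono hm.le) le_rfl)
          (measurableSet_lt measurable_norm measurable_const :
            MeasurableSet {y : EuclideanSpace ℝ (Fin d) | ‖y‖ < R})
      have heq2 : FH n = {ω | R ≤ ‖X n ω‖} ∩ {ω | ∀ m, m < n → ‖X m ω‖ < R} := rfl
      rw [heq2]; exact h1.inter h2
    have hFH_meas : ∀ n, MeasurableSet (FH n) := fun n => h𝒢_le n _ (hFH_measG n)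
    have hFH_disj : Pairwise (Function.onFun Disjoint FH) := by
      intro n m hnm
      rw [Function.onFun, Set.disjoint_left]
      rcases lt_or_gt_of_ne hnm with hlt | hlt
      · intro ω hω hω'
        exact absurd hω.1 (not_le.mpr (hω'.2 n hlt))
      · intro ω hω hω'
        exact absurd hω'.1 (not_le.mpr (hω.2 m hlt))
    -- the bad events about the noise after the first hit
    set Cset : ℕ → ℕ → Set Ω := fun n j => {ω | R * 9 ^ j < ‖Z (n + 1 + j) ω‖} with hCset
    have hC_comap : ∀ n j,
        MeasurableSet[MeasurableSpace.comap (Z (n+1+j)) inferInstance] (Cset n j) :=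
      fun n j => ⟨{z | R * 9 ^ j < ‖z‖}, hset_meas _, rfl⟩
    have hC_meas : ∀ n j, MeasurableSet (Cset n j) :=
      fun n j => measurableSet_lt measurable_const ((hZ_meas (n+1+j)).norm)
    have hμC : ∀ n j, μ (Cset n j) = tail (R * 9 ^ j) := fun n j => htail_eq _ _
    -- covering of the bad event
    have hcover : Bad ⊆ {ω | ∀ n, ‖X n ω‖ < R} ∪ ⋃ n, (FH n ∩ ⋃ j, Cset n j) := by
      intro ω hω
      by_cases hreach : ∀ n, ‖X n ω‖ < R
      · exact Or.inl hreach
      · push_neg at hreach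
        have hex : ∃ n, R ≤ ‖X n ω‖ := hreach
        right
        set n := Nat.find hex with hn
        have hfh : ω ∈ FH n := ⟨Nat.find_spec hex, fun m hm => by
          have := Nat.find_min hex hm; push_neg at this; exact this⟩
        refine Set.mem_iUnion.mpr ⟨n, hfh, ?_⟩
        by_contra hno
        simp only [Set.mem_iUnion, not_exists, hCset, Set.mem_setOf_eq, not_lt] at hno
        have hesc := escape R hRM₁ n ω (Nat.find_spec hex) hno
        exact hω (escape_tendsto R hR1 n ω hesc)
    -- measure bound
    have hterm : ∀ n, μ (FH n ∩ ⋃ j, Cset n j) ≤ μ (FH n) * (K * (ENNReal.ofReal (R ^ α))⁻¹) := by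
      intro n
      have h1 : FH n ∩ ⋃ j, Cset n j = ⋃ j, (FH n ∩ Cset n j) := Set.inter_iUnion _ _
      have h2 : ∀ j, μ (FH n ∩ Cset n j) = μ (FH n) * tail (R * 9 ^ j) := by
        intro j
        have hind := (Indep_iff _ _ _).mp (hIndep n (n+1+j) (by omega)) (FH n) (Cset n j)
          (hFH_measG n) (hC_comap n j)
        rw [hind, hμC]
      calc μ (FH n ∩ ⋃ j, Cset n j) ≤ ∑' j, μ (FH n ∩ Cset n j) := by
            rw [h1]; exact measure_iUnion_le _
        _ = ∑' j, μ (FH n) * tail (R * 9 ^ j) := by simp_rw [h2]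
        _ = μ (FH n) * ∑' j, tail (R * 9 ^ j) := ENNReal.tsum_mul_left
        _ ≤ μ (FH n) * (K * (ENNReal.ofReal (R ^ α))⁻¹) :=
            mul_le_mul_right (tail_sum R hRr₀) _
    calc μ Bad ≤ μ ({ω | ∀ n, ‖X n ω‖ < R} ∪ ⋃ n, (FH n ∩ ⋃ j, Cset n j)) :=
          measure_mono hcover
      _ ≤ μ {ω | ∀ n, ‖X n ω‖ < R} + μ (⋃ n, (FH n ∩ ⋃ j, Cset n j)) := measure_union_le _ _
      _ = μ (⋃ n, (FH n ∩ ⋃ j, Cset n j)) := by rw [reach R, zero_add]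
      _ ≤ ∑' n, μ (FH n ∩ ⋃ j, Cset n j) := measure_iUnion_le _
      _ ≤ ∑' n, μ (FH n) * (K * (ENNReal.ofReal (R ^ α))⁻¹) := ENNReal.tsum_le_tsum hterm
      _ = (∑' n, μ (FH n)) * (K * (ENNReal.ofReal (R ^ α))⁻¹) := ENNReal.tsum_mul_right
      _ ≤ 1 * (K * (ENNReal.ofReal (R ^ α))⁻¹) := by
          apply mul_le_mul_left
          rw [← measure_iUnion hFH_disj hFH_meas]
          exact prob_le_one
      _ = K * (ENNReal.ofReal (R ^ α))⁻¹ := one_mul _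
  -- ### Conclusion: let R → ∞
  set R₀ : ℝ := max M₁ r₀ with hR₀
  have hlim : Tendsto (fun n : ℕ => K * (ENNReal.ofReal ((R₀ + n) ^ α))⁻¹) atTop (nhds 0) := by
    have h1 : Tendsto (fun n : ℕ => (R₀ + (n:ℝ))) atTop atTop :=
      tendsto_atTop_add_const_left _ _ tendsto_natCast_atTop_atTop
    have h2 : Tendsto (fun n : ℕ => ((R₀ + (n:ℝ)) ^ α)) atTop atTop :=
      (tendsto_rpow_atTop (by linarith [hα.1] : (0:ℝ) < α)).comp h1
    have h3 : Tendsto (fun n : ℕ => ENNReal.ofReal ((R₀ + (n:ℝ)) ^ α)) atTop (nhds ⊤) :=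
      ENNReal.tendsto_ofReal_atTop.comp h2
    have h4 : Tendsto (fun n : ℕ => (ENNReal.ofReal ((R₀ + (n:ℝ)) ^ α))⁻¹) atTop (nhds 0) := by
      simpa using ENNReal.tendsto_inv_iff.mpr h3
    simpa using ENNReal.Tendsto.const_mul h4 (Or.inr hKtop)
  have hbound : ∀ n : ℕ, μ Bad ≤ K * (ENNReal.ofReal ((R₀ + n) ^ α))⁻¹ := by
    intro n
    exact main (R₀ + n) (le_add_of_nonneg_right (Nat.cast_nonneg n))
  have hzero : μ Bad = 0 := by
    have := ge_of_tendsto hlim (Eventually.of_forall hbound)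
    exact le_antisymm this zero_le
  rw [ae_iff]
  exact hzero

end
end
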